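/- Let V be a nonempty finite set, f : 2^V → ℝ a set function with f(∅) = 0, and α ∈ ℝ. Let r : V → ℝ satisfy r(X) ≤ f_α(X) for every nonempty X ⊆ V (i.e., r ∈ P(f_α)), and let Q be a partition of V such that r(C) = f_α(C) for every block C ∈ Q. Then for every nonempty subfamily 𝒳 ⊆ Q with union X̃ = ⊔_{C ∈ 𝒳} C: r(X̃) = Σ_{C ∈ 𝒳} f_α(C) = f̂_α(X̃); in particular, 𝒳 is a minimizing partition achieving the Dilworth truncation f̂_α(X̃), Q minimizes f_α[·] over all partitions of V, and r(V) = f̂_α(V). -/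

import Mathlib

open Finset

variable {α : Type*}

/-- The residual function `f_α(X) = f(X) - f(V) + α` for nonempty `X`, and `0` on `∅`. -/
noncomputable def resFn [DecidableEq α] (f : Finset α → ℝ) (V : Finset α) (a : ℝ)
    (X : Finset α) : ℝ :=
  if X = ∅ then 0 else f X - f V + a

/-- The partition sum `f_α[P] = Σ_{C ∈ P} f_α(C)`. -/
noncomputable def partSum [DecidableEq α] (f : Finset α → ℝ) (V : Finset α) (a : ℝ)
    {X : Finset α} (P : Finpartition X) : ℝ :=
  ∑ C ∈ P.parts, resFn f V a C

/-- The Dilworth truncation `f̂_α(X) = min over partitions P of X of f_α[P]`. -/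
noncomputable def dilworth [DecidableEq α] (f : Finset α → ℝ) (V : Finset α) (a : ℝ)
    (X : Finset α) : ℝ :=
  sInf {y : ℝ | ∃ P : Finpartition X, partSum f V a P = y}

/-- `X` is a union of blocks of the partition `Q`. -/
def isUnionOfBlocks [DecidableEq α] {V : Finset α} (Q : Finpartition V) (X : Finset α) : Prop :=
  ∃ S ⊆ Q.parts, X = S.sup id
/-- Lemma 2(a),(b) (essential properties): if `r ∈ P(f_α)` and `r` is tight on every
block of a partition `Q` of `V`, then for every nonempty subfamily `𝒳 ⊆ Q` with union
`X̃`, `r(X̃) = Σ_{C ∈ 𝒳} f_α(C) = f̂_α(X̃)`; moreover `Q` minimizes `f_α[·]` over all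
partitions of `V` and `r(V) = f̂_α(V)`. -/
theorem essential_properties [DecidableEq α] (V : Finset α) (hV : V.Nonempty)
    (f : Finset α → ℝ) (hf : f ∅ = 0) (a : ℝ) (r : α → ℝ)
    (hr : ∀ X : Finset α, X ⊆ V → X.Nonempty → ∑ v ∈ X, r v ≤ resFn f V a X)
    (Q : Finpartition V)
    (htight : ∀ C ∈ Q.parts, ∑ v ∈ C, r v = resFn f V a C) :
    (∀ S : Finset (Finset α), S ⊆ Q.parts → S.Nonempty →
      (∑ v ∈ S.sup id, r v = ∑ C ∈ S, resFn f V a C ∧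
       ∑ C ∈ S, resFn f V a C = dilworth f V a (S.sup id))) ∧
    partSum f V a Q = dilworth f V a V ∧
    ∑ v ∈ V, r v = dilworth f V a V := by
  -- general fact: for any X ⊆ V and partition P of X, r(X) ≤ partSum P
  have key : ∀ (X : Finset α), X ⊆ V → ∀ P : Finpartition X,
      ∑ v ∈ X, r v ≤ partSum f V a P := by
    intro X hXV P
    have hd : (P.parts : Set (Finset α)).PairwiseDisjoint id :=
      P.supIndep.pairwiseDisjoint
    have hsum : ∑ v ∈ X, r v = ∑ C ∈ P.parts, ∑ v ∈ C, r v := by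
      have h2 : ∑ v ∈ P.parts.sup id, r v = ∑ C ∈ P.parts, ∑ v ∈ C, r v := by
        rw [Finset.sup_eq_biUnion, Finset.sum_biUnion hd]; rfl
      rwa [P.sup_parts] at h2
    rw [hsum, partSum]
    apply Finset.sum_le_sum
    intro C hC
    exact hr C ((P.le hC).trans hXV) (P.nonempty_of_mem_parts hC)
  have main : ∀ S : Finset (Finset α), S ⊆ Q.parts → S.Nonempty →
      (∑ v ∈ S.sup id, r v = ∑ C ∈ S, resFn f V a C ∧
       ∑ C ∈ S, resFn f V a C = dilworth f V a (S.sup id)) := by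
    intro S hS hSne
    have hd : (S : Set (Finset α)).PairwiseDisjoint id :=
      Q.supIndep.pairwiseDisjoint.subset (by exact_mod_cast hS)
    have hXV : S.sup id ≤ V := Finset.sup_le fun C hC => Q.le (hS hC)
    have hrX : ∑ v ∈ S.sup id, r v = ∑ C ∈ S, resFn f V a C := by
      rw [Finset.sup_eq_biUnion, Finset.sum_biUnion hd]
      exact Finset.sum_congr rfl fun C hC => htight C (hS hC)
    refine ⟨hrX, ?_⟩
    -- S itself is a partition of S.sup id
    have hsi : S.SupIndep id := Q.supIndep.subset hS
    have hbot : ⊥ ∉ S := fun h => Q.bot_notMem (hS h)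
    set P0 : Finpartition (S.sup id) := ⟨S, hsi, rfl, hbot⟩ with hP0
    have hmem : (∑ C ∈ S, resFn f V a C) ∈
        {y : ℝ | ∃ P : Finpartition (S.sup id), partSum f V a P = y} := ⟨P0, rfl⟩
    have hlb : ∀ y ∈ {y : ℝ | ∃ P : Finpartition (S.sup id), partSum f V a P = y},
        (∑ C ∈ S, resFn f V a C) ≤ y := by
      rintro y ⟨P, rfl⟩
      rw [← hrX]
      exact key _ hXV P
    refine le_antisymm (le_csInf ⟨_, hmem⟩ hlb) (csInf_le ⟨_, hlb⟩ hmem)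
  have h := main Q.parts le_rfl (Q.parts_nonempty hV.ne_empty)
  rw [Q.sup_parts] at h
  exact ⟨main, h.2, h.1.trans h.2⟩
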